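/- Let D be a nonempty open subset of ℂⁿ, let 0 < ε < δ, and let Φ : D(δ) → ℂⁿ be an injective holomorphic map with sup_{z ∈ D(δ)} ‖Φ(z) − z‖ < ε. Then for every point x ∈ D(δ − ε), the number of preimages of x under Φ restricted to the open ball B(x, ε) is exactly one; in particular Φ⁻¹ : D(δ − ε) → D(δ) is well defined and satisfies ‖Φ⁻¹(x) − x‖ < ε for all x ∈ D(δ − ε). -/

import Mathlib

set_option maxHeartbeats 1000000

open Set Metric

/-- The open `r`-neighborhood of a set `M ⊆ ℂⁿ`. -/
def nbhd {n : ℕ} (M : Set (EuclideanSpace ℂ (Fin n))) (r : ℝ) :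
    Set (EuclideanSpace ℂ (Fin n)) :=
  {z | ∃ x ∈ M, ‖x - z‖ < r}

section EarleHamilton

open Complex

lemma mobius_denom_ne {w₀ w : ℂ} (h₀ : ‖w₀‖ < 1) (h : ‖w‖ < 1) :
    1 - (starRingEnd ℂ) w₀ * w ≠ 0 := by
  intro hc
  have h1 : ‖(starRingEnd ℂ) w₀ * w‖ < 1 := by
    rw [norm_mul, RCLike.norm_conj]
    nlinarith [norm_nonneg w₀, norm_nonneg w]
  have : (1 : ℂ) = (starRingEnd ℂ) w₀ * w := by linear_combination hc
  rw [← this] at h1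
  simp at h1

lemma mobius_maps {w₀ w : ℂ} (h₀ : ‖w₀‖ < 1) (h : ‖w‖ < 1) :
    ‖(w - w₀) / (1 - (starRingEnd ℂ) w₀ * w)‖ < 1 := by
  rw [norm_div, div_lt_one (norm_pos_iff.2 (mobius_denom_ne h₀ h))]
  have key : normSq (1 - (starRingEnd ℂ) w₀ * w) - normSq (w - w₀)
      = (1 - normSq w₀) * (1 - normSq w) := by
    simp only [normSq_apply, Complex.sub_re, Complex.sub_im, Complex.mul_re, Complex.mul_im,
      Complex.one_re, Complex.one_im, Complex.conj_re, Complex.conj_im]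
    ring
  have h₀' : normSq w₀ < 1 := by
    have := Complex.sq_norm w₀
    nlinarith [norm_nonneg w₀]
  have h' : normSq w < 1 := by
    have := Complex.sq_norm w
    nlinarith [norm_nonneg w]
  have hlt : normSq (w - w₀) < normSq (1 - (starRingEnd ℂ) w₀ * w) := by nlinarith
  have e1 := Complex.sq_norm (w - w₀)
  have e2 := Complex.sq_norm (1 - (starRingEnd ℂ) w₀ * w)
  nlinarith [norm_nonneg (w - w₀), norm_nonneg (1 - (starRingEnd ℂ) w₀ * w)]

/-- Schwarz–Pick derivative estimate at the center. -/
lemma schwarz_pick_center {f : ℂ → ℂ} {c : ℂ} {R : ℝ} (hR : 0 < R)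
    (hd : DifferentiableOn ℂ f (ball c R))
    (hm : MapsTo f (ball c R) (ball (0:ℂ) 1)) :
    ‖deriv f c‖ ≤ (1 - ‖f c‖ ^ 2) / R := by
  set w₀ : ℂ := f c with hw₀
  have hc : c ∈ ball c R := mem_ball_self hR
  have hw₀1 : ‖w₀‖ < 1 := by simpa using hm hc
  set m : ℂ → ℂ := fun w => (w - w₀) / (1 - (starRingEnd ℂ) w₀ * w) with hm_def
  have hmder : HasDerivAt m (1 / (1 - (starRingEnd ℂ) w₀ * w₀)) w₀ := by
    have hden : 1 - (starRingEnd ℂ) w₀ * w₀ ≠ 0 := mobius_denom_ne hw₀1 hw₀1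
    have h1 : HasDerivAt (fun w : ℂ => w - w₀) 1 w₀ := (hasDerivAt_id w₀).sub_const w₀
    have h2 : HasDerivAt (fun w : ℂ => 1 - (starRingEnd ℂ) w₀ * w) (-(starRingEnd ℂ) w₀) w₀ := by
      simpa using ((hasDerivAt_id w₀).const_mul ((starRingEnd ℂ) w₀)).const_sub 1
    have := h1.fun_div h2 hden
    refine this.congr_deriv ?_
    rw [sub_self, zero_mul, sub_zero, one_mul, sq, ← div_div, div_self hden]
  -- the composite
  have hfd : ∀ z ∈ ball c R, DifferentiableAt ℂ f z := fun z hz =>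
    hd.differentiableAt (isOpen_ball.mem_nhds hz)
  have hcomp : DifferentiableOn ℂ (m ∘ f) (ball c R) := by
    intro z hz
    have hfz : ‖f z‖ < 1 := by simpa using hm hz
    have hden : 1 - (starRingEnd ℂ) w₀ * f z ≠ 0 := mobius_denom_ne hw₀1 hfz
    have hmdiff : DifferentiableAt ℂ m (f z) := by
      apply DifferentiableAt.div
      · exact (differentiable_id.sub_const w₀).differentiableAt
      · exact ((differentiable_id.const_mul _).const_sub 1).differentiableAt
      · exact hden
    exact (hmdiff.comp z (hfd z hz)).differentiableWithinAt
  have hmaps : MapsTo (m ∘ f) (ball c R) (ball ((m ∘ f) c) 1) := by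
    intro z hz
    have hfz : ‖f z‖ < 1 := by simpa using hm hz
    have : (m ∘ f) c = 0 := by simp [hm_def, sub_self, hw₀]
    rw [this, mem_ball, dist_zero_right]
    exact mobius_maps hw₀1 hfz
  have key := Complex.norm_deriv_le_div_of_mapsTo_ball hcomp (hmaps.mono_right ball_subset_closedBall) hR
  -- compute deriv (m ∘ f) c
  have hchain : deriv (m ∘ f) c = (1 / (1 - (starRingEnd ℂ) w₀ * w₀)) * deriv f c := by
    have hfc : HasDerivAt f (deriv f c) c := (hfd c hc).hasDerivAt
    exact (hmder.comp c hfc).deriv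
  rw [hchain] at key
  have hnorm : ‖(1 : ℂ) - (starRingEnd ℂ) w₀ * w₀‖ = 1 - ‖w₀‖ ^ 2 := by
    have h1 : (starRingEnd ℂ) w₀ * w₀ = (normSq w₀ : ℂ) := by rw [mul_comm, Complex.mul_conj]
    have h2 : normSq w₀ = ‖w₀‖ ^ 2 := by
      rw [← Complex.sq_norm]
    have hpos : (0:ℝ) ≤ 1 - ‖w₀‖ ^ 2 := by nlinarith [norm_nonneg w₀]
    rw [h1, h2]
    rw [show (1 : ℂ) - ((‖w₀‖ ^ 2 : ℝ) : ℂ) = (((1 - ‖w₀‖ ^ 2 : ℝ)) : ℂ) by push_cast; ring]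
    rw [Complex.norm_real]
    exact abs_of_nonneg hpos
  have hpos : 0 < 1 - ‖w₀‖ ^ 2 := by nlinarith [norm_nonneg w₀]
  rw [norm_mul, norm_div, norm_one, hnorm] at key
  have h3 : (1 - ‖w₀‖^2) * (1/(1-‖w₀‖^2) * ‖deriv f c‖) ≤ (1 - ‖w₀‖^2) * (1/R) :=
    mul_le_mul_of_nonneg_left key hpos.le
  have h4 : (1 - ‖w₀‖^2) * (1/(1-‖w₀‖^2) * ‖deriv f c‖) = ‖deriv f c‖ := by
    rw [← mul_assoc, mul_one_div, div_self hpos.ne', one_mul]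
  rw [h4, mul_one_div] at h3
  exact h3

variable {E : Type*} [NormedAddCommGroup E] [InnerProductSpace ℂ E] [CompleteSpace E]

lemma earle_hamilton {p : E} {δ r : ℝ} (hr : 0 ≤ r) (hrδ : r < δ)
    {g : E → E} (hg : DifferentiableOn ℂ g (ball p δ))
    (hmap : MapsTo g (ball p δ) (closedBall p r)) :
    ∃ z ∈ ball p δ, g z = z := by
  have hδ : 0 < δ := lt_of_le_of_lt hr hrδ
  have hpb : p ∈ ball p δ := mem_ball_self hδ
  have hsub : closedBall p r ⊆ ball p δ := closedBall_subset_ball hrδ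
  by_cases hgp : g p = p
  · exact ⟨p, hpb, hgp⟩
  set z₁ := g p with hz₁
  set d := ‖z₁ - p‖ with hd
  have hd0 : 0 < d := by
    rw [hd, norm_pos_iff]
    exact sub_ne_zero.2 hgp
  have hdr : d ≤ r := by
    have := hmap hpb
    rwa [mem_closedBall, dist_eq_norm] at this
  have hr0 : 0 < r := lt_of_lt_of_le hd0 hdr
  set R₀ := δ / d with hR₀def
  have hR₀1 : 1 < R₀ := (one_lt_div hd0).2 (lt_of_le_of_lt hdr hrδ)
  set σ : ℂ → E := fun w => p + w • (z₁ - p) with hσ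
  have hσmem : ∀ w : ℂ, w ∈ ball (0:ℂ) R₀ → σ w ∈ ball p δ := by
    intro w hw
    rw [mem_ball, dist_zero_right] at hw
    rw [mem_ball, dist_eq_norm]
    have : σ w - p = w • (z₁ - p) := by rw [hσ]; simp
    rw [this, norm_smul, ← hd]
    calc ‖w‖ * d < R₀ * d := by exact mul_lt_mul_of_pos_right hw hd0
      _ = δ := by rw [hR₀def]; field_simp
  set c : ℕ → ℂ → E := fun k => g^[k] ∘ σ with hcdef
  have hcsucc : ∀ k w, c (k+1) w = g (c k w) := by
    intro k w
    simp only [hcdef, Function.comp_apply, Function.iterate_succ_apply']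
  have hck : ∀ k, MapsTo (c k) (ball (0:ℂ) R₀) (ball p δ) ∧
      DifferentiableOn ℂ (c k) (ball (0:ℂ) R₀) := by
    intro k
    induction k with
    | zero =>
      constructor
      · intro w hw
        simpa [hcdef] using hσmem w hw
      · have : Differentiable ℂ σ := by
          rw [hσ]
          exact (differentiable_id.smul_const (z₁ - p)).const_add p
        intro w hw
        exact (this w).differentiableWithinAt
    | succ k ih =>
      have heq : c (k+1) = g ∘ c k := funext fun w => hcsucc k w
      constructor
      · intro w hw
        rw [hcsucc k w]
        exact hsub (hmap (ih.1 hw))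
      · rw [heq]
        exact hg.comp ih.2 ih.1
  set t : ℝ := (δ - r) / (2 * (δ + r)) with ht_def
  have ht : 0 < t := div_pos (by linarith) (by linarith)
  have hφbound : r + t * (2 * r) < δ := by
    have h2 : t * (2 * r) = (δ - r) * (2 * r) / (2 * (δ + r)) := by rw [ht_def]; ring
    have h3 : (δ - r) * (2 * r) / (2 * (δ + r)) < δ - r := by
      rw [div_lt_iff₀ (by linarith)]
      nlinarith [mul_pos (sub_pos.2 hrδ) hδ]
    linarith
  have ht1 : (0:ℝ) < 1 + t := by linarith
  -- the key Schwarz--Pick/Earle--Hamilton induction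
  have key : ∀ k, ∀ w ∈ ball (0:ℂ) R₀, ∀ f : E → ℂ,
      DifferentiableOn ℂ f (ball p δ) → MapsTo f (ball p δ) (ball (0:ℂ) 1) →
      ‖deriv (f ∘ c k) w‖ ≤ (1 - ‖f (c k w)‖ ^ 2) * (1 / (1 + t)) ^ k / (R₀ - ‖w‖) := by
    intro k
    induction k with
    | zero =>
      intro w hw f hfd hfm
      have hwn : ‖w‖ < R₀ := by rwa [mem_ball, dist_zero_right] at hw
      have hR : 0 < R₀ - ‖w‖ := by linarith
      have hsub2 : ball w (R₀ - ‖w‖) ⊆ ball (0:ℂ) R₀ := by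
        apply ball_subset_ball'
        rw [dist_zero_right]
        linarith
      have hd0' : DifferentiableOn ℂ (f ∘ c 0) (ball w (R₀ - ‖w‖)) :=
        (hfd.comp (hck 0).2 (hck 0).1).mono hsub2
      have hm0 : MapsTo (f ∘ c 0) (ball w (R₀ - ‖w‖)) (ball 0 1) :=
        (hfm.comp (hck 0).1).mono_left hsub2
      have := schwarz_pick_center hR hd0' hm0
      simpa [pow_zero, mul_one] using this
    | succ k ih =>
      intro w hw f hfd hfm
      set u := c k w with hu_def
      have hu : u ∈ ball p δ := (hck k).1 hw
      set y := g u with hy_def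
      have hy' : y ∈ closedBall p r := hmap hu
      have hy : y ∈ ball p δ := hsub hy'
      set φ : E → E := fun z => g z + (t:ℂ) • (g z - y) with hφ
      have hφm : MapsTo φ (ball p δ) (ball p δ) := by
        intro z hz
        have h1 : ‖g z - p‖ ≤ r := by
          have := hmap hz; rwa [mem_closedBall, dist_eq_norm] at this
        have h2 : ‖y - p‖ ≤ r := by rwa [mem_closedBall, dist_eq_norm] at hy'
        rw [mem_ball, dist_eq_norm]
        have e : φ z - p = (g z - p) + (t:ℂ) • (g z - y) := by rw [hφ]; simp; abel
        rw [e]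
        calc ‖(g z - p) + (t:ℂ) • (g z - y)‖ ≤ ‖g z - p‖ + ‖(t:ℂ) • (g z - y)‖ :=
              norm_add_le _ _
          _ ≤ r + t * (2 * r) := by
              apply add_le_add h1
              rw [norm_smul, Complex.norm_real, Real.norm_eq_abs, abs_of_pos ht]
              apply mul_le_mul_of_nonneg_left _ ht.le
              calc ‖g z - y‖ = ‖(g z - p) - (y - p)‖ := by abel_nf
                _ ≤ ‖g z - p‖ + ‖y - p‖ := norm_sub_le _ _
                _ ≤ 2 * r := by linarith
          _ < δ := hφbound
      have hφd : DifferentiableOn ℂ φ (ball p δ) := by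
        rw [hφ]
        exact hg.add ((hg.sub_const y).const_smul (t:ℂ))
      have hFd : DifferentiableOn ℂ (f ∘ φ) (ball p δ) := hfd.comp hφd hφm
      have hFm : MapsTo (f ∘ φ) (ball p δ) (ball 0 1) := hfm.comp hφm
      have IH := ih w hw (f ∘ φ) hFd hFm
      -- derivative data
      have hckd : HasDerivAt (c k) (deriv (c k) w) w :=
        ((hck k).2.differentiableAt (isOpen_ball.mem_nhds hw)).hasDerivAt
      set v := deriv (c k) w with hv_def
      have hgd : HasFDerivAt g (fderiv ℂ g u) u :=
        (hg.differentiableAt (isOpen_ball.mem_nhds hu)).hasFDerivAt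
      set Gv := fderiv ℂ g u v with hGv_def
      have heq : c (k+1) = g ∘ c k := funext fun w => hcsucc k w
      have hck1w : c (k+1) w = y := by rw [hcsucc k w]
      have hck1d : HasDerivAt (c (k+1)) Gv w := by
        rw [heq]
        exact hgd.comp_hasDerivAt w hckd
      have hfdy : HasFDerivAt f (fderiv ℂ f y) y :=
        (hfd.differentiableAt (isOpen_ball.mem_nhds hy)).hasFDerivAt
      have hfdy' : HasFDerivAt f (fderiv ℂ f y) (c (k+1) w) := by rw [hck1w]; exact hfdy
      have hA : HasDerivAt (f ∘ c (k+1)) (fderiv ℂ f y Gv) w :=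
        hfdy'.comp_hasDerivAt w hck1d
      -- the auxiliary curve
      set hcurve : ℂ → E := fun μ => c (k+1) μ + (t:ℂ) • (c (k+1) μ - y) with hhdef
      have hhval : hcurve w = y := by rw [hhdef]; simp [hck1w]
      have hhd : HasDerivAt hcurve (Gv + (t:ℂ) • Gv) w := by
        rw [hhdef]
        exact hck1d.add ((hck1d.sub_const y).const_smul (t:ℂ))
      have hFc : (f ∘ φ) ∘ c k = f ∘ hcurve := by
        funext μ
        simp only [Function.comp_apply, hφ, hhdef, hcsucc k μ, hy_def, hu_def]
      have hfdy'' : HasFDerivAt f (fderiv ℂ f y) (hcurve w) := by rw [hhval]; exact hfdy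
      have hB : HasDerivAt (f ∘ hcurve) (fderiv ℂ f y (Gv + (t:ℂ) • Gv)) w :=
        hfdy''.comp_hasDerivAt w hhd
      have hderiv1 : deriv ((f ∘ φ) ∘ c k) w = fderiv ℂ f y (Gv + (t:ℂ) • Gv) := by
        rw [hFc]; exact hB.deriv
      have hlin : fderiv ℂ f y (Gv + (t:ℂ) • Gv) = (1 + (t:ℂ)) * fderiv ℂ f y Gv := by
        rw [map_add, map_smul, smul_eq_mul]
        ring
      have hnorm1 : ‖deriv ((f ∘ φ) ∘ c k) w‖ = (1 + t) * ‖fderiv ℂ f y Gv‖ := by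
        rw [hderiv1, hlin, norm_mul]
        congr 1
        rw [show (1 + (t:ℂ)) = ((1 + t : ℝ) : ℂ) by push_cast; ring, Complex.norm_real]
        exact abs_of_pos ht1
      have hφu : (f ∘ φ) (c k w) = f y := by
        simp only [Function.comp_apply, hφ, ← hu_def, ← hy_def, sub_self, smul_zero, add_zero]
      rw [hφu] at IH
      rw [hnorm1] at IH
      have hAd : deriv (f ∘ c (k+1)) w = fderiv ℂ f y Gv := hA.deriv
      rw [hAd, hck1w]
      have hwn : ‖w‖ < R₀ := by rwa [mem_ball, dist_zero_right] at hw
      have hR : 0 < R₀ - ‖w‖ := by linarith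
      rw [pow_succ]
      calc ‖fderiv ℂ f y Gv‖
          = ((1 + t) * ‖fderiv ℂ f y Gv‖) / (1 + t) := by field_simp
        _ ≤ ((1 - ‖f y‖ ^ 2) * (1 / (1 + t)) ^ k / (R₀ - ‖w‖)) / (1 + t) :=
            (div_le_div_iff_of_pos_right ht1).2 IH
        _ = (1 - ‖f y‖ ^ 2) * ((1 / (1 + t)) ^ k * (1 / (1 + t))) / (R₀ - ‖w‖) := by
            field_simp
  -- extraction of a Euclidean derivative bound along [0,1]
  set C : ℝ := 2 * δ / (R₀ - 1) with hC_def
  have hR₀1' : (0:ℝ) < R₀ - 1 := by linarith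
  have hC0 : 0 ≤ C := by positivity
  have hderbound : ∀ k, ∀ τ : ℝ, τ ∈ Icc (0:ℝ) 1 →
      ‖deriv (c k) (τ:ℂ)‖ ≤ C * (1 / (1 + t)) ^ k := by
    intro k τ hτ
    have hτn : ‖(τ:ℂ)‖ ≤ 1 := by
      rw [Complex.norm_real, Real.norm_eq_abs, _root_.abs_of_nonneg hτ.1]
      exact hτ.2
    have hwball : (τ:ℂ) ∈ ball (0:ℂ) R₀ := by
      rw [mem_ball, dist_zero_right]
      linarith
    set v := deriv (c k) (τ:ℂ) with hv_def
    by_cases hv : v = 0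
    · rw [hv, norm_zero]
      positivity
    have hvn : (0:ℝ) < ‖v‖ := norm_pos_iff.2 hv
    set w₀ : E := ((‖v‖⁻¹ : ℝ) : ℂ) • v with hw₀_def
    have hw₀ : ‖w₀‖ = 1 := by
      rw [hw₀_def, norm_smul, Complex.norm_real, Real.norm_eq_abs,
        abs_of_pos (inv_pos.2 hvn)]
      field_simp
    set f : E → ℂ := fun z => ((2 * δ : ℝ) : ℂ)⁻¹ * (innerSL ℂ w₀ (z - p)) with hf_def
    have hfd : DifferentiableOn ℂ f (ball p δ) := by
      apply DifferentiableOn.const_mul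
      exact ((innerSL ℂ w₀).differentiable.comp (differentiable_id.sub_const p)).differentiableOn
    have hfm : MapsTo f (ball p δ) (ball 0 1) := by
      intro z hz
      rw [mem_ball, dist_zero_right, hf_def]
      simp only [norm_mul]
      have h1 : ‖(innerSL ℂ w₀) (z - p)‖ ≤ ‖w₀‖ * ‖z - p‖ := by
        rw [innerSL_apply_apply]
        exact norm_inner_le_norm _ _
      rw [hw₀, one_mul] at h1
      have h2 : ‖z - p‖ < δ := by rwa [mem_ball, dist_eq_norm] at hz
      have h3 : ‖(((2 * δ : ℝ)) : ℂ)⁻¹‖ = (2 * δ)⁻¹ := by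
        rw [norm_inv, Complex.norm_real, Real.norm_eq_abs, abs_of_pos (by linarith)]
      rw [h3]
      calc (2 * δ)⁻¹ * ‖(innerSL ℂ w₀) (z - p)‖ ≤ (2 * δ)⁻¹ * δ := by
            apply mul_le_mul_of_nonneg_left (le_trans h1 h2.le) (by positivity)
        _ < 1 := by
            rw [inv_mul_lt_iff₀ (by positivity)]
            linarith
    have hkey := key k (τ:ℂ) hwball f hfd hfm
    -- compute deriv (f ∘ c k) τ
    have hckd : HasDerivAt (c k) v (τ:ℂ) :=
      ((hck k).2.differentiableAt (isOpen_ball.mem_nhds hwball)).hasDerivAt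
    have hcomp : HasDerivAt (f ∘ c k) (((2 * δ : ℝ) : ℂ)⁻¹ * (innerSL ℂ w₀ v)) (τ:ℂ) := by
      have h2 : HasDerivAt (fun μ => (innerSL ℂ w₀) (c k μ - p)) (innerSL ℂ w₀ v) (τ:ℂ) :=
        (innerSL ℂ w₀).hasFDerivAt.comp_hasDerivAt _ (hckd.sub_const p)
      have := h2.const_mul (((2 * δ : ℝ) : ℂ)⁻¹)
      exact this
    have hin : (innerSL ℂ w₀) v = ((‖v‖ : ℝ) : ℂ) := by
      rw [innerSL_apply_apply, hw₀_def, inner_smul_left, Complex.conj_ofReal,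
        inner_self_eq_norm_sq_to_K]
      have hne : ((‖v‖ : ℝ) : ℂ) ≠ 0 := by
        simpa using hvn.ne'
      push_cast
      field_simp
      rfl
    have hderiveq : ‖deriv (f ∘ c k) (τ:ℂ)‖ = (2 * δ)⁻¹ * ‖v‖ := by
      rw [hcomp.deriv, norm_mul, hin, norm_inv, Complex.norm_real, Complex.norm_real,
        Real.norm_eq_abs, Real.norm_eq_abs, abs_of_pos (by linarith : (0:ℝ) < 2 * δ),
        abs_of_pos hvn]
    rw [hderiveq] at hkey
    -- weaken the right-hand side
    have hub : (1 - ‖f (c k (τ:ℂ))‖ ^ 2) * (1 / (1 + t)) ^ k / (R₀ - ‖(τ:ℂ)‖)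
        ≤ (1 / (1 + t)) ^ k / (R₀ - 1) := by
      have hq0 : (0:ℝ) ≤ (1 / (1 + t)) ^ k := by positivity
      have hA : 1 - ‖f (c k (τ:ℂ))‖ ^ 2 ≤ 1 := by
        have := sq_nonneg ‖f (c k (τ:ℂ))‖
        linarith
      have hRp : (0:ℝ) < R₀ - ‖(τ:ℂ)‖ := by linarith
      rw [show (1 / (1 + t)) ^ k / (R₀ - 1) = 1 * (1 / (1 + t)) ^ k / (R₀ - 1) by ring]
      gcongr
    have := le_trans hkey hub
    rw [hC_def]
    calc ‖v‖ = (2 * δ) * ((2 * δ)⁻¹ * ‖v‖) := by field_simp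
      _ ≤ (2 * δ) * ((1 / (1 + t)) ^ k / (R₀ - 1)) := by
          apply mul_le_mul_of_nonneg_left this (by positivity)
      _ = 2 * δ / (R₀ - 1) * (1 / (1 + t)) ^ k := by ring
  -- geometric bound on consecutive iterates
  have hdist : ∀ k, dist (g^[k] p) (g^[k+1] p) ≤ C * (1 / (1 + t)) ^ k := by
    intro k
    have hmem : ∀ τ : ℝ, τ ∈ Icc (0:ℝ) 1 → (τ:ℂ) ∈ ball (0:ℂ) R₀ := by
      intro τ hτ
      rw [mem_ball, dist_zero_right, Complex.norm_real, Real.norm_eq_abs,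
        _root_.abs_of_nonneg hτ.1]
      linarith [hτ.2]
    have hder : ∀ τ ∈ Icc (0:ℝ) 1, HasDerivWithinAt (fun s : ℝ => c k (s:ℂ))
        (deriv (c k) (τ:ℂ)) (Icc (0:ℝ) 1) τ := by
      intro τ hτ
      have h1 : HasDerivAt (c k) (deriv (c k) (τ:ℂ)) (τ:ℂ) :=
        ((hck k).2.differentiableAt (isOpen_ball.mem_nhds (hmem τ hτ))).hasDerivAt
      have h2 : HasDerivAt (fun s : ℝ => (s:ℂ)) 1 τ := Complex.ofRealCLM.hasDerivAt
      have h3 := h1.scomp τ h2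
      simp only [one_smul] at h3
      exact h3.hasDerivWithinAt
    have hbound : ∀ τ ∈ Icc (0:ℝ) 1, ‖deriv (c k) (τ:ℂ)‖ ≤ C * (1 / (1 + t)) ^ k :=
      fun τ hτ => hderbound k τ hτ
    have := (convex_Icc (0:ℝ) 1).norm_image_sub_le_of_norm_hasDerivWithin_le
      hder hbound (left_mem_Icc.2 zero_le_one) (right_mem_Icc.2 zero_le_one)
    have he0 : c k ((0:ℝ):ℂ) = g^[k] p := by
      simp only [hcdef, Function.comp_apply, hσ, Complex.ofReal_zero, zero_smul, add_zero]
    have he1 : c k ((1:ℝ):ℂ) = g^[k+1] p := by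
      have : σ ((1:ℝ):ℂ) = z₁ := by rw [hσ]; simp
      simp only [hcdef, Function.comp_apply, this, hz₁, ← Function.iterate_succ_apply]
    rw [he0, he1] at this
    rw [dist_eq_norm, norm_sub_rev]
    simpa using this
  -- Cauchy sequence and its limit
  have hq1 : 1 / (1 + t) < 1 := by
    rw [div_lt_one ht1]
    linarith
  have hcauchy : CauchySeq (fun k => g^[k] p) :=
    cauchySeq_of_le_geometric _ C hq1 hdist
  obtain ⟨z, hz⟩ := cauchySeq_tendsto_of_complete hcauchy
  have hin : ∀ k, g^[k] p ∈ ball p δ := by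
    intro k
    induction k with
    | zero => simpa using hpb
    | succ k ih =>
      rw [Function.iterate_succ_apply']
      exact hsub (hmap ih)
  have hzball : z ∈ closedBall p r := by
    have hev : ∀ᶠ k in Filter.atTop, g^[k] p ∈ closedBall p r := by
      filter_upwards [Filter.eventually_ge_atTop 1] with k hk
      obtain ⟨m, rfl⟩ := Nat.exists_eq_add_of_le hk
      rw [add_comm, Function.iterate_succ_apply']
      exact hmap (hin m)
    exact isClosed_closedBall.mem_of_tendsto hz hev
  have hzball' : z ∈ ball p δ := hsub hzball
  have hcont : ContinuousAt g z :=
    (hg.differentiableAt (isOpen_ball.mem_nhds hzball')).continuousAt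
  have h1 : Filter.Tendsto (fun k => g^[k+1] p) Filter.atTop (nhds z) :=
    hz.comp (Filter.tendsto_add_atTop_nat 1)
  have h2 : Filter.Tendsto (fun k => g (g^[k] p)) Filter.atTop (nhds (g z)) :=
    hcont.tendsto.comp hz
  have h3 : (fun k => g (g^[k] p)) = fun k => g^[k+1] p := by
    funext k
    rw [Function.iterate_succ_apply']
  rw [h3] at h2
  exact ⟨z, hzball', tendsto_nhds_unique h2 h1⟩

end EarleHamilton

/-- Near-identity injective holomorphic maps have a well defined near-identity
inverse: every `x ∈ D(δ-ε)` has exactly one preimage under `Φ`, which lies in the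
ball `B(x, ε)`; in particular `‖Φ⁻¹(x) - x‖ < ε`. -/
theorem near_identity_unique_preimage (n : ℕ) (D : Set (EuclideanSpace ℂ (Fin n)))
    (hD : D.Nonempty) (hDo : IsOpen D) (ε δ : ℝ) (hε : 0 < ε) (hεδ : ε < δ)
    (Φ : EuclideanSpace ℂ (Fin n) → EuclideanSpace ℂ (Fin n))
    (hinj : Set.InjOn Φ (nbhd D δ)) (hholo : DifferentiableOn ℂ Φ (nbhd D δ))
    (hnear : ∀ z ∈ nbhd D δ, ‖Φ z - z‖ < ε) :
    ∀ x ∈ nbhd D (δ - ε), ∃ z, z ∈ nbhd D δ ∧ Φ z = x ∧ ‖z - x‖ < ε ∧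
      ∀ w ∈ nbhd D δ, Φ w = x → w = z := by
  intro x hx
  obtain ⟨p, hpD, hpx⟩ := hx
  have hδ : 0 < δ := lt_trans hε hεδ
  have hball : ball p δ ⊆ nbhd D δ := by
    intro z hz
    refine ⟨p, hpD, ?_⟩
    rw [mem_ball, dist_eq_norm] at hz
    rwa [← norm_sub_rev z p]
  set g : EuclideanSpace ℂ (Fin n) → EuclideanSpace ℂ (Fin n) :=
    fun z => x + z - Φ z with hg_def
  have hgd : DifferentiableOn ℂ g (ball p δ) := by
    apply DifferentiableOn.sub _ (hholo.mono hball)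
    exact (differentiable_id.const_add x).differentiableOn
  set r : ℝ := ‖p - x‖ + ε with hr_def
  have hr0 : 0 ≤ r := by positivity
  have hrδ : r < δ := by rw [hr_def]; linarith
  have hgnear : ∀ z ∈ ball p δ, ‖g z - x‖ < ε := by
    intro z hz
    have he : g z - x = z - Φ z := by rw [hg_def]; simp only; abel
    rw [he, norm_sub_rev]
    exact hnear z (hball hz)
  have hmap : MapsTo g (ball p δ) (closedBall p r) := by
    intro z hz
    rw [mem_closedBall, dist_eq_norm]
    have he : g z - p = (g z - x) + (x - p) := by abel
    rw [he]
    calc ‖(g z - x) + (x - p)‖ ≤ ‖g z - x‖ + ‖x - p‖ := norm_add_le _ _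
      _ ≤ ε + ‖p - x‖ := by
          rw [norm_sub_rev x p]
          exact add_le_add (hgnear z hz).le le_rfl
      _ = r := by rw [hr_def]; ring
  obtain ⟨z, hzball, hzfix⟩ := earle_hamilton hr0 hrδ hgd hmap
  have hΦz : Φ z = x := by
    have h2 : x + z - Φ z = z := hzfix
    have h3 : x - Φ z = 0 := by
      have h4 := congrArg (fun w => w - z) h2
      rw [show x + z - Φ z - z = x - Φ z from by abel, sub_self] at h4
      exact h4
    exact (sub_eq_zero.mp h3).symm
  have hznb : z ∈ nbhd D δ := hball hzball
  have hzx : ‖z - x‖ < ε := by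
    have h := hnear z hznb
    rw [hΦz] at h
    rwa [norm_sub_rev] at h
  refine ⟨z, hznb, hΦz, hzx, ?_⟩
  intro w hw hΦw
  exact hinj hw hznb (by rw [hΦw, hΦz])
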